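/- Let C be a category with pullbacks, let P be a class of morphisms of C stable under composition and under base change, and let F : Cᵒᵖ → Type be a presheaf such that for every morphism f : V ⟶ W belonging to P, the restriction map F(W) → F(V) is injective. Let π : U ⟶ X, π' : Y ⟶ U, π_i : Y ⟶ W and π_s : W ⟶ X be morphisms belonging to P with π ∘ π' = π_s ∘ π_i. If F satisfies the sheaf condition for the singleton covers {π_s} and {π_i} (i.e. F(X) → F(W) ⇉ F(W ×_X W) and F(W) → F(Y) ⇉ F(Y ×_W Y) are equalizer diagrams), then F satisfies the sheaf condition for the singleton cover {π}: the diagram F(X) → F(U) ⇉ F(U ×_X U) is an equalizer. -/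
import Mathlib

/-!
STATEMENT 6: Let C be a category with pullbacks, P a class of morphisms stable under
composition and base change, and F a presheaf of types such that F(W) → F(V) is
injective for every f : V ⟶ W in P. If π = π_s ∘ π_i (up to composing with π' ∈ P)
with π, π', π_i, π_s ∈ P and F satisfies the sheaf condition for the singleton covers
{π_s} and {π_i}, then F satisfies the sheaf condition for the singleton cover {π}.
-/

open CategoryTheory CategoryTheory.Limits Opposite

universe w v u

/-- The sheaf condition for the singleton cover `{g}`: the diagram
`F(W) → F(V) ⇉ F(V ×_W V)` is an equalizer of types. -/
def SingletonSheafCondition {C : Type u} [Category.{v} C] [HasPullbacks C]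
    (F : Cᵒᵖ ⥤ Type w) {V W : C} (g : V ⟶ W) : Prop :=
  ∀ x : F.obj (op V),
    F.map (pullback.fst g g).op x = F.map (pullback.snd g g).op x →
      ∃! y : F.obj (op W), F.map g.op y = x

/-- Helper: if `x` has equal restrictions to `U ×_X U`, then its restrictions along any
two morphisms that agree after composing with `π` are equal. -/
lemma restriction_eq_of_comp_eq {C : Type u} [Category.{v} C] [HasPullbacks C]
    (F : Cᵒᵖ ⥤ Type w) {U X : C} (π : U ⟶ X) (x : F.obj (op U))
    (hx : F.map (pullback.fst π π).op x = F.map (pullback.snd π π).op x)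
    {Z : C} (a b : Z ⟶ U) (h : a ≫ π = b ≫ π) :
    F.map a.op x = F.map b.op x := by
  have ha : pullback.lift a b h ≫ pullback.fst π π = a := pullback.lift_fst _ _ _
  have hb : pullback.lift a b h ≫ pullback.snd π π = b := pullback.lift_snd _ _ _
  calc F.map a.op x = F.map (pullback.lift a b h).op (F.map (pullback.fst π π).op x) := by
        rw [← FunctorToTypes.map_comp_apply, ← op_comp, ha]
    _ = F.map (pullback.lift a b h).op (F.map (pullback.snd π π).op x) := by rw [hx]
    _ = F.map b.op x := by rw [← FunctorToTypes.map_comp_apply, ← op_comp, hb]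

theorem singletonSheafCondition_of_factorization
    {C : Type u} [Category.{v} C] [HasPullbacks C]
    (P : MorphismProperty C) [P.IsStableUnderComposition] [P.IsStableUnderBaseChange]
    (F : Cᵒᵖ ⥤ Type w)
    (hinj : ∀ {V W : C} (f : V ⟶ W), P f → Function.Injective (F.map f.op))
    {U X Y W : C} (π : U ⟶ X) (π' : Y ⟶ U) (πi : Y ⟶ W) (πs : W ⟶ X)
    (hπ : P π) (hπ' : P π') (hπi : P πi) (hπs : P πs)
    (hfac : π' ≫ π = πi ≫ πs)
    (hs : SingletonSheafCondition F πs) (hi : SingletonSheafCondition F πi) :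
    SingletonSheafCondition F π := by
  intro x hx
  set g : Y ⟶ X := πi ≫ πs with hg
  set x' : F.obj (op Y) := F.map π'.op x with hx'def
  -- Claim 1: x' has equal restrictions on Y ×_W Y
  have h1 : F.map (pullback.fst πi πi).op x' = F.map (pullback.snd πi πi).op x' := by
    have e1 : (pullback.fst πi πi ≫ π') ≫ π = (pullback.snd πi πi ≫ π') ≫ π := by
      simp only [Category.assoc, hfac, hg, pullback.condition_assoc]
    calc F.map (pullback.fst πi πi).op x'
        = F.map (pullback.fst πi πi ≫ π').op x := by
          rw [hx'def, ← FunctorToTypes.map_comp_apply, ← op_comp]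
      _ = F.map (pullback.snd πi πi ≫ π').op x :=
          restriction_eq_of_comp_eq F π x hx _ _ e1
      _ = F.map (pullback.snd πi πi).op x' := by
          rw [hx'def, ← FunctorToTypes.map_comp_apply, ← op_comp]
  obtain ⟨z, hz, -⟩ := hi x' h1
  -- Claim 2: z has equal restrictions on W ×_X W
  have h2 : F.map (pullback.fst πs πs).op z = F.map (pullback.snd πs πs).op z := by
    -- the induced map Y ×_X Y ⟶ W ×_X W is in P
    have hq : P (pullback.map g g πs πs πi πi (𝟙 X)
        ((Category.comp_id _).trans hg) ((Category.comp_id _).trans hg)) :=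
      MorphismProperty.pullback_map hπi hπi hg hg
    apply hinj _ hq
    set q := pullback.map g g πs πs πi πi (𝟙 X)
        ((Category.comp_id _).trans hg) ((Category.comp_id _).trans hg) with hqdef
    have qfst : q ≫ pullback.fst πs πs = pullback.fst g g ≫ πi := pullback.lift_fst _ _ _
    have qsnd : q ≫ pullback.snd πs πs = pullback.snd g g ≫ πi := pullback.lift_snd _ _ _
    have e2 : (pullback.fst g g ≫ π') ≫ π = (pullback.snd g g ≫ π') ≫ π := by
      simp only [Category.assoc, hfac, ← hg, pullback.condition]
    calc F.map q.op (F.map (pullback.fst πs πs).op z)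
        = F.map (pullback.fst g g ≫ πi).op z := by
          rw [← FunctorToTypes.map_comp_apply, ← op_comp, qfst]
      _ = F.map (pullback.fst g g).op x' := by
          rw [op_comp, FunctorToTypes.map_comp_apply, hz]
      _ = F.map (pullback.fst g g ≫ π').op x := by
          rw [hx'def, ← FunctorToTypes.map_comp_apply, ← op_comp]
      _ = F.map (pullback.snd g g ≫ π').op x :=
          restriction_eq_of_comp_eq F π x hx _ _ e2
      _ = F.map (pullback.snd g g).op x' := by
          rw [hx'def, ← FunctorToTypes.map_comp_apply, ← op_comp]
      _ = F.map (pullback.snd g g ≫ πi).op z := by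
          rw [op_comp, FunctorToTypes.map_comp_apply, hz]
      _ = F.map q.op (F.map (pullback.snd πs πs).op z) := by
          rw [← FunctorToTypes.map_comp_apply, ← op_comp, qsnd]
  obtain ⟨y, hy, -⟩ := hs z h2
  refine ⟨y, ?_, ?_⟩
  · -- F(π) y = x, using injectivity along π'
    apply hinj π' hπ'
    calc F.map π'.op (F.map π.op y) = F.map (π' ≫ π).op y := by
          rw [← FunctorToTypes.map_comp_apply, ← op_comp]
      _ = F.map πi.op (F.map πs.op y) := by
          rw [hfac, op_comp, FunctorToTypes.map_comp_apply]
      _ = x' := by rw [hy, hz]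
      _ = F.map π'.op x := hx'def
  · intro y' hy'
    apply hinj π hπ
    rw [hy']
    -- need: F.map π.op y = x; reprove it? use the previous part
    -- we instead show F.map π.op y = x directly
    apply hinj π' hπ'
    calc F.map π'.op x = x' := hx'def.symm
      _ = F.map πi.op (F.map πs.op y) := by rw [hy, hz]
      _ = F.map (π' ≫ π).op y := by rw [hfac, op_comp, FunctorToTypes.map_comp_apply]
      _ = F.map π'.op (F.map π.op y) := by rw [op_comp, FunctorToTypes.map_comp_apply]
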